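/- arXiv:2602.22146 — 6 statements merged into one kernel-verified Lean document; each statement's English description precedes it below -/
import Mathlib

section
/- Three-point inequality with KL regularization (Lemma, three-point-KL). Let Y be a finite nonempty set, π_old and π_ref probability vectors on Y, and let Π_eff be the set of probability vectors on Y whose support is contained in supp(π_old) ∩ supp(π_ref). Let g : Y → ℝ and η > 0, β > 0, and suppose π_new maximizes π ↦ ⟨g, π⟩ − η·KL(π‖π_old) − β·KL(π‖π_ref) over Π_eff. Then for every π' ∈ Π_eff: ⟨g, π_new − π'⟩ − β·( KL(π_new‖π_ref) − KL(π'‖π_ref) ) ≥ η·( −KL(π'‖π_old) + KL(π'‖π_new) + KL(π_new‖π_old) ) + β·KL(π'‖π_new). -/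
open BigOperators

/-- Discrete Kullback–Leibler divergence `KL(p‖q) = Σ_y p(y)·log(p(y)/q(y))`,
with the convention `0·log 0 = 0` (automatic since `Real.log 0 = 0`). -/
noncomputable def KLdiv {Y : Type*} [Fintype Y] (p q : Y → ℝ) : ℝ :=
  ∑ y, p y * Real.log (p y / q y)

/-- `p` is a probability vector on the finite set `Y`. -/
def IsProbVec {Y : Type*} [Fintype Y] (p : Y → ℝ) : Prop :=
  (∀ y, 0 ≤ p y) ∧ ∑ y, p y = 1

/-- **Three-point inequality with KL regularization.**
If `π_new` maximizes `π ↦ ⟨g, π⟩ − η·KL(π‖π_old) − β·KL(π‖π_ref)` over the probability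
vectors supported in `supp(π_old) ∩ supp(π_ref)`, then for every such `π'`:
`⟨g, π_new − π'⟩ − β(KL(π_new‖π_ref) − KL(π'‖π_ref))
  ≥ η(−KL(π'‖π_old) + KL(π'‖π_new) + KL(π_new‖π_old)) + β·KL(π'‖π_new)`. -/
theorem three_point_KL
    {Y : Type*} [Fintype Y] [Nonempty Y]
    (πold πref : Y → ℝ) (hπold : IsProbVec πold) (hπref : IsProbVec πref)
    (g : Y → ℝ) (η β : ℝ) (hη : 0 < η) (hβ : 0 < β)
    (πnew : Y → ℝ) (hπnew : IsProbVec πnew)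
    (hπnewSupp : ∀ y, πold y = 0 ∨ πref y = 0 → πnew y = 0)
    (hmax : ∀ π : Y → ℝ, IsProbVec π → (∀ y, πold y = 0 ∨ πref y = 0 → π y = 0) →
      (∑ y, g y * π y) - η * KLdiv π πold - β * KLdiv π πref
        ≤ (∑ y, g y * πnew y) - η * KLdiv πnew πold - β * KLdiv πnew πref)
    (π' : Y → ℝ) (hπ' : IsProbVec π')
    (hπ'Supp : ∀ y, πold y = 0 ∨ πref y = 0 → π' y = 0) :
    η * (-KLdiv π' πold + KLdiv π' πnew + KLdiv πnew πold) + β * KLdiv π' πnew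
      ≤ (∑ y, g y * (πnew y - π' y)) - β * (KLdiv πnew πref - KLdiv π' πref) := by
  classical
  obtain ⟨hnn', hsum'⟩ := hπ'
  obtain ⟨hnnN, hsumN⟩ := hπnew
  obtain ⟨hnnO, _⟩ := hπold
  obtain ⟨hnnR, _⟩ := hπref
  set c : ℝ := η + β with hcdef
  have hc0 : (0:ℝ) < c := by positivity
  -- a support helper
  have hposOR : ∀ (p : Y → ℝ), (∀ y, πold y = 0 ∨ πref y = 0 → p y = 0) →
      ∀ y, p y ≠ 0 → 0 < πold y ∧ 0 < πref y := by
    intro p hs y hy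
    constructor
    · rcases (hnnO y).lt_or_eq with h | h
      · exact h
      · exact absurd (hs y (Or.inl h.symm)) hy
    · rcases (hnnR y).lt_or_eq with h | h
      · exact h
      · exact absurd (hs y (Or.inr h.symm)) hy
  -- the Gibbs weights
  set w : Y → ℝ := fun y =>
    if 0 < πold y ∧ 0 < πref y then
      Real.exp ((g y + η * Real.log (πold y) + β * Real.log (πref y)) / c) else 0 with hwdef
  have hw_nn : ∀ y, 0 ≤ w y := by
    intro y
    by_cases h : 0 < πold y ∧ 0 < πref y <;> simp [hwdef, h, (Real.exp_pos _).le]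
  have hw_pos : ∀ y, 0 < πold y → 0 < πref y → 0 < w y := by
    intro y h1 h2
    simp [hwdef, h1, h2, Real.exp_pos]
  have hex : ∃ y, 0 < πnew y := by
    by_contra h
    push_neg at h
    have hz : ∀ y, πnew y = 0 := fun y => le_antisymm (h y) (hnnN y)
    rw [Finset.sum_congr rfl (fun y _ => hz y)] at hsumN
    simp at hsumN
  obtain ⟨y0, hy0⟩ := hex
  obtain ⟨hy0o, hy0r⟩ := hposOR πnew hπnewSupp y0 hy0.ne'
  set Z : ℝ := ∑ y, w y with hZdef
  have hZ : 0 < Z :=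
    Finset.sum_pos' (fun y _ => hw_nn y) ⟨y0, Finset.mem_univ _, hw_pos y0 hy0o hy0r⟩
  set q : Y → ℝ := fun y => w y / Z with hqdef
  have hq_nn : ∀ y, 0 ≤ q y := fun y => div_nonneg (hw_nn y) hZ.le
  have hq_sum : ∑ y, q y = 1 := by
    rw [hqdef, ← Finset.sum_div]
    exact div_self hZ.ne'
  have hq_supp : ∀ y, πold y = 0 ∨ πref y = 0 → q y = 0 := by
    intro y h
    have : ¬ (0 < πold y ∧ 0 < πref y) := by
      rcases h with h | h <;> simp [h]
    simp [hqdef, hwdef, this]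
  have hq_pos : ∀ y, 0 < πold y → 0 < πref y → 0 < q y := fun y h1 h2 =>
    div_pos (hw_pos y h1 h2) hZ
  have hlogq : ∀ y, 0 < πold y → 0 < πref y →
      c * Real.log (q y) = g y + η * Real.log (πold y) + β * Real.log (πref y)
        - c * Real.log Z := by
    intro y ho hr
    have hwy : w y = Real.exp ((g y + η * Real.log (πold y) + β * Real.log (πref y)) / c) := by
      simp [hwdef, ho, hr]
    have : q y = w y / Z := rfl
    rw [this, Real.log_div (hw_pos y ho hr).ne' hZ.ne', hwy, Real.log_exp]
    field_simp
  -- the objective in terms of KL to q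
  have hF : ∀ π : Y → ℝ, (∀ y, 0 ≤ π y) → (∀ y, πold y = 0 ∨ πref y = 0 → π y = 0) →
      (∑ y, g y * π y) - η * KLdiv π πold - β * KLdiv π πref
        = c * Real.log Z * (∑ y, π y) - c * KLdiv π q := by
    intro π hnn hs
    have hpt : ∀ y ∈ Finset.univ,
        g y * π y - η * (π y * Real.log (π y / πold y)) - β * (π y * Real.log (π y / πref y))
          = c * Real.log Z * π y - c * (π y * Real.log (π y / q y)) := by
      intro y _
      rcases eq_or_ne (π y) 0 with h0 | h0
      · simp [h0]
      · obtain ⟨ho, hr⟩ := hposOR π hs y h0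
        have hqy : 0 < q y := hq_pos y ho hr
        rw [Real.log_div h0 ho.ne', Real.log_div h0 hr.ne', Real.log_div h0 hqy.ne']
        have hl := hlogq y ho hr
        linear_combination (-(π y)) * hl
    calc (∑ y, g y * π y) - η * KLdiv π πold - β * KLdiv π πref
        = ∑ y, (g y * π y - η * (π y * Real.log (π y / πold y))
            - β * (π y * Real.log (π y / πref y))) := by
          rw [KLdiv, KLdiv, Finset.mul_sum, Finset.mul_sum, ← Finset.sum_sub_distrib,
            ← Finset.sum_sub_distrib]
      _ = ∑ y, (c * Real.log Z * π y - c * (π y * Real.log (π y / q y))) :=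
          Finset.sum_congr rfl hpt
      _ = c * Real.log Z * (∑ y, π y) - c * KLdiv π q := by
          rw [KLdiv, Finset.mul_sum, Finset.mul_sum, ← Finset.sum_sub_distrib]
  have hKLqq : KLdiv q q = 0 := by
    apply Finset.sum_eq_zero
    intro y _
    rcases eq_or_ne (q y) 0 with h | h
    · rw [h, zero_mul]
    · rw [div_self h, Real.log_one, mul_zero]
  -- πnew minimizes KL(·‖q), hence KL(πnew‖q) ≤ 0
  have h1 : KLdiv πnew q ≤ 0 := by
    have hmq := hmax q ⟨hq_nn, hq_sum⟩ hq_supp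
    rw [hF q hq_nn hq_supp, hF πnew hnnN hπnewSupp, hq_sum, hsumN, hKLqq] at hmq
    nlinarith
  -- πnew = q
  have hnewq : ∀ y, πnew y = q y := by
    set f : Y → ℝ := fun y => q y - πnew y + πnew y * Real.log (πnew y / q y) with hfdef
    have hf_nn : ∀ y, 0 ≤ f y := by
      intro y
      rcases eq_or_ne (πnew y) 0 with h0 | h0
      · simp [hfdef, h0]
        exact hq_nn y
      · obtain ⟨ho, hr⟩ := hposOR πnew hπnewSupp y h0
        have hp : 0 < πnew y := (hnnN y).lt_of_ne (Ne.symm h0)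
        have hqy : 0 < q y := hq_pos y ho hr
        have hle := Real.log_le_sub_one_of_pos (div_pos hqy hp)
        rw [Real.log_div hqy.ne' hp.ne'] at hle
        have h2 : πnew y * (Real.log (q y) - Real.log (πnew y))
            ≤ πnew y * (q y / πnew y - 1) := mul_le_mul_of_nonneg_left hle hp.le
        have heq : πnew y * (q y / πnew y) = q y := mul_div_cancel₀ _ hp.ne'
        simp only [hfdef]
        rw [Real.log_div hp.ne' hqy.ne']
        nlinarith [h2, heq]
    have hfsum : ∑ y, f y = KLdiv πnew q := by
      simp only [hfdef, KLdiv]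
      rw [Finset.sum_add_distrib, Finset.sum_sub_distrib, hq_sum, hsumN]
      ring
    have hzero : ∀ y ∈ Finset.univ, f y = 0 := by
      rw [← Finset.sum_eq_zero_iff_of_nonneg (fun y _ => hf_nn y)]
      have : (0:ℝ) ≤ ∑ y, f y := Finset.sum_nonneg fun y _ => hf_nn y
      rw [hfsum] at this ⊢
      linarith
    intro y
    have hfy := hzero y (Finset.mem_univ y)
    rcases eq_or_ne (πnew y) 0 with h0 | h0
    · simp only [hfdef, h0, zero_mul, add_zero, sub_zero] at hfy
      rw [h0, hfy]
    · obtain ⟨ho, hr⟩ := hposOR πnew hπnewSupp y h0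
      have hp : 0 < πnew y := (hnnN y).lt_of_ne (Ne.symm h0)
      have hqy : 0 < q y := hq_pos y ho hr
      by_contra hne
      have ht : q y / πnew y ≠ 1 := by
        intro h
        exact hne ((div_eq_one_iff_eq hp.ne').mp h).symm
      have hlt := Real.log_lt_sub_one_of_pos (div_pos hqy hp) ht
      rw [Real.log_div hqy.ne' hp.ne'] at hlt
      have h2 : πnew y * (Real.log (q y) - Real.log (πnew y))
          < πnew y * (q y / πnew y - 1) := mul_lt_mul_of_pos_left hlt hp
      have heq : πnew y * (q y / πnew y) = q y := mul_div_cancel₀ _ hp.ne'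
      simp only [hfdef] at hfy
      rw [Real.log_div hp.ne' hqy.ne'] at hfy
      nlinarith [h2, heq, hfy]
  have hlogn : ∀ y, 0 < πold y → 0 < πref y →
      c * Real.log (πnew y) = g y + η * Real.log (πold y) + β * Real.log (πref y)
        - c * Real.log Z := by
    intro y ho hr
    rw [hnewq y]
    exact hlogq y ho hr
  -- the pointwise identity
  have hpt2 : ∀ y ∈ Finset.univ,
      η * (-(π' y * Real.log (π' y / πold y)) + π' y * Real.log (π' y / πnew y)
          + πnew y * Real.log (πnew y / πold y))
        + β * (π' y * Real.log (π' y / πnew y))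
        - (g y * (πnew y - π' y)
          - β * (πnew y * Real.log (πnew y / πref y) - π' y * Real.log (π' y / πref y)))
      = c * Real.log Z * (π' y - πnew y) := by
    intro y _
    by_cases hP : 0 < πold y ∧ 0 < πref y
    · obtain ⟨ho, hr⟩ := hP
      have hn : 0 < πnew y := by
        rw [hnewq y]; exact hq_pos y ho hr
      have hl := hlogn y ho hr
      rcases eq_or_ne (π' y) 0 with ha | ha
      · rw [ha]
        rw [Real.log_div hn.ne' ho.ne', Real.log_div hn.ne' hr.ne']
        linear_combination (πnew y) * hl
      · rw [Real.log_div ha ho.ne', Real.log_div ha hn.ne', Real.log_div hn.ne' ho.ne',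
          Real.log_div ha hr.ne', Real.log_div hn.ne' hr.ne']
        linear_combination (πnew y - π' y) * hl
    · have hOR : πold y = 0 ∨ πref y = 0 := by
        rcases not_and_or.mp hP with h | h
        · exact Or.inl (le_antisymm (not_lt.mp h) (hnnO y))
        · exact Or.inr (le_antisymm (not_lt.mp h) (hnnR y))
      have ha := hπ'Supp y hOR
      have hb := hπnewSupp y hOR
      rw [ha, hb]
      ring
  -- assemble
  have hEq : η * (-KLdiv π' πold + KLdiv π' πnew + KLdiv πnew πold) + β * KLdiv π' πnew
      - ((∑ y, g y * (πnew y - π' y)) - β * (KLdiv πnew πref - KLdiv π' πref)) = 0 := by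
    calc η * (-KLdiv π' πold + KLdiv π' πnew + KLdiv πnew πold) + β * KLdiv π' πnew
        - ((∑ y, g y * (πnew y - π' y)) - β * (KLdiv πnew πref - KLdiv π' πref))
        = ∑ y, (η * (-(π' y * Real.log (π' y / πold y)) + π' y * Real.log (π' y / πnew y)
            + πnew y * Real.log (πnew y / πold y))
          + β * (π' y * Real.log (π' y / πnew y))
          - (g y * (πnew y - π' y)
            - β * (πnew y * Real.log (πnew y / πref y) - π' y * Real.log (π' y / πref y)))) := by
          simp only [KLdiv, Finset.mul_sum, ← Finset.sum_neg_distrib, ← Finset.sum_add_distrib,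
            ← Finset.sum_sub_distrib]
      _ = ∑ y, c * Real.log Z * (π' y - πnew y) := Finset.sum_congr rfl hpt2
      _ = c * Real.log Z * ((∑ y, π' y) - ∑ y, πnew y) := by
          rw [← Finset.mul_sum, Finset.sum_sub_distrib]
      _ = 0 := by rw [hsum', hsumN]; ring
  linarith
end

section
/- Primal–dual coupling bound (inequality from the proof of Theorem 1, eq. A_3). Let Y be a finite nonempty set, H a finite nonempty index set, and R_j : Y → ℝ with |R_j(y)| ≤ R_max for all j ∈ H and y ∈ Y. Let p, q be probability vectors on Y with supp(p) ⊆ supp(q), let λ, λ' ∈ ℝ^H, and let C > 0. Then Σ_{y∈Y} ( p(y) − q(y) )·Σ_{j∈H} ( λ_j − λ'_j )·R_j(y) ≤ C·KL(p‖q) + ( |H|·R_max² / (2C) )·‖λ − λ'‖₂². -/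
open BigOperators

section Aux
open Real Set

private lemma G_deriv (t : ℝ) (ht : 0 < t) :
    HasDerivAt (fun x => (x+1) * Real.log x - 2*(x-1)) (Real.log t + (1/t - 1)) t := by
  have h1 : HasDerivAt (fun x : ℝ => (x+1) * Real.log x) (1 * Real.log t + (t+1) * t⁻¹) t :=
    (((hasDerivAt_id t).add_const 1)).mul (Real.hasDerivAt_log ht.ne')
  have h2 : HasDerivAt (fun x : ℝ => 2*(x-1)) 2 t := by
    simpa using ((hasDerivAt_id t).sub_const 1).const_mul 2
  have := h1.sub h2
  refine this.congr_deriv ?_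
  field_simp
  ring

private lemma G_mono : MonotoneOn (fun x => (x+1) * Real.log x - 2*(x-1)) (Ioi (0:ℝ)) := by
  apply monotoneOn_of_deriv_nonneg (convex_Ioi 0)
  · exact fun x hx => ((G_deriv x hx).continuousAt.continuousWithinAt)
  · intro x hx
    rw [interior_Ioi] at hx
    exact (G_deriv x hx).differentiableAt.differentiableWithinAt
  · intro x hx
    rw [interior_Ioi] at hx
    replace hx : (0:ℝ) < x := hx
    rw [(G_deriv x hx).deriv]
    have := Real.log_le_sub_one_of_pos (show (0:ℝ) < 1/x by positivity)
    rw [Real.log_div one_ne_zero hx.ne', Real.log_one] at this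
    linarith

private lemma G_nonpos {x : ℝ} (hx0 : 0 < x) (hx1 : x ≤ 1) :
    (x+1) * Real.log x - 2*(x-1) ≤ 0 := by
  have := G_mono (mem_Ioi.2 hx0) (mem_Ioi.2 one_pos) hx1
  simpa using this

private lemma G_nonneg {x : ℝ} (hx1 : 1 ≤ x) :
    0 ≤ (x+1) * Real.log x - 2*(x-1) := by
  have := G_mono (mem_Ioi.2 one_pos) (mem_Ioi.2 (lt_of_lt_of_le one_pos hx1)) hx1
  simpa using this

private lemma F_deriv (t : ℝ) (ht : 0 < t) :
    HasDerivAt (fun x => 2*(x+2) * (x*Real.log x - x + 1) - 3*(x-1)^2)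
      (4 * ((t+1) * Real.log t - 2*(t-1))) t := by
  have hlog : HasDerivAt (fun x : ℝ => x * Real.log x - x + 1) (Real.log t) t := by
    have h1 : HasDerivAt (fun x : ℝ => x * Real.log x) (1 * Real.log t + t * t⁻¹) t :=
      (hasDerivAt_id t).mul (Real.hasDerivAt_log ht.ne')
    have := (h1.sub (hasDerivAt_id t)).add_const 1
    refine this.congr_deriv ?_
    field_simp
    ring
  have h2 : HasDerivAt (fun x : ℝ => 2*(x+2)) 2 t := by
    simpa using ((hasDerivAt_id t).add_const 2).const_mul 2
  have h3 : HasDerivAt (fun x : ℝ => 3*(x-1)^2) (3*(2*(t-1))) t := by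
    simpa using (((hasDerivAt_id t).sub_const 1).pow 2).const_mul 3
  have := (h2.mul hlog).sub h3
  refine this.congr_deriv ?_
  ring

private lemma key_ineq {t : ℝ} (ht : 0 < t) :
    3*(t-1)^2 ≤ 2*(t+2) * (t*Real.log t - t + 1) := by
  have hFanti : AntitoneOn (fun x => 2*(x+2) * (x*Real.log x - x + 1) - 3*(x-1)^2)
      (Ioc (0:ℝ) 1) := by
    apply antitoneOn_of_deriv_nonpos (convex_Ioc 0 1)
    · exact fun x hx => (F_deriv x hx.1).continuousAt.continuousWithinAt
    · intro x hx
      rw [interior_Ioc] at hx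
      exact (F_deriv x hx.1).differentiableAt.differentiableWithinAt
    · intro x hx
      rw [interior_Ioc] at hx
      rw [(F_deriv x hx.1).deriv]
      have := G_nonpos hx.1 hx.2.le
      linarith
  have hFmono : MonotoneOn (fun x => 2*(x+2) * (x*Real.log x - x + 1) - 3*(x-1)^2)
      (Ici (1:ℝ)) := by
    apply monotoneOn_of_deriv_nonneg (convex_Ici 1)
    · exact fun x hx => (F_deriv x (lt_of_lt_of_le one_pos hx)).continuousAt.continuousWithinAt
    · intro x hx
      rw [interior_Ici] at hx
      exact (F_deriv x (lt_trans one_pos hx)).differentiableAt.differentiableWithinAt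
    · intro x hx
      rw [interior_Ici] at hx
      rw [(F_deriv x (lt_trans one_pos hx)).deriv]
      have := G_nonneg hx.le
      linarith
  rcases le_or_gt t 1 with h | h
  · have := hFanti (mem_Ioc.2 ⟨ht, h⟩) (mem_Ioc.2 ⟨one_pos, le_refl 1⟩) h
    simp only [Real.log_one] at this
    nlinarith [this]
  · have := hFmono (mem_Ici.2 (le_refl 1)) (mem_Ici.2 h.le) h.le
    simp only [Real.log_one] at this
    nlinarith [this]

private lemma pointwise_bound {a b : ℝ} (ha : 0 ≤ a) (hb : 0 < b) :
    (a - b)^2 ≤ (2*(a + 2*b)/3) * (a * Real.log (a/b) - a + b) := by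
  rcases eq_or_lt_of_le ha with h | h
  · simp only [← h]
    rw [zero_div, Real.log_zero]
    nlinarith
  · have ht : 0 < a / b := div_pos h hb
    have key := key_ineq ht
    have hab : a / b * b = a := div_mul_cancel₀ a hb.ne'
    set t := a / b
    have hlog : a * Real.log t - a + b = b * (t * Real.log t - t + 1) := by
      rw [← hab]; ring
    have hsum : 2*(a + 2*b)/3 = b * (2*(t+2)/3) := by
      rw [← hab]; ring
    rw [hlog, hsum]
    calc (a - b)^2 = b^2 * (t-1)^2 := by rw [← hab]; ring
      _ ≤ b^2 * ((2*(t+2)/3) * (t * Real.log t - t + 1)) := by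
          nlinarith [sq_nonneg b, mul_pos hb hb]
      _ = b * (2*(t+2)/3) * (b * (t * Real.log t - t + 1)) := by ring

private lemma pinsker {Y : Type*} [Fintype Y] (p q : Y → ℝ)
    (hp : IsProbVec p) (hq : IsProbVec q) (hsupp : ∀ y, q y = 0 → p y = 0) :
    (∑ y, |p y - q y|)^2 ≤ 2 * KLdiv p q := by
  set w : Y → ℝ := fun y => 2*(p y + 2*q y)/3 with hw
  set kl : Y → ℝ := fun y => p y * Real.log (p y / q y) - p y + q y with hkl
  have hwnn : ∀ y, 0 ≤ w y := fun y => by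
    have := hp.1 y; have := hq.1 y; simp only [hw]; linarith
  have hwzero : ∀ y, w y = 0 → p y = 0 ∧ q y = 0 := fun y h => by
    have := hp.1 y; have := hq.1 y
    simp only [hw] at h
    constructor <;> linarith
  have hptwise : ∀ y, (p y - q y)^2 ≤ w y * kl y := by
    intro y
    rcases eq_or_lt_of_le (hq.1 y) with h | h
    · have hp0 := hsupp y h.symm
      simp [hkl, hp0, ← h]
    · exact pointwise_bound (hp.1 y) h
  -- Cauchy–Schwarz
  set f : Y → ℝ := fun y => Real.sqrt (w y)
  set g : Y → ℝ := fun y => |p y - q y| / Real.sqrt (w y)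
  have hfg : ∀ y, f y * g y = |p y - q y| := by
    intro y
    rcases eq_or_lt_of_le (hwnn y) with h | h
    · obtain ⟨h1, h2⟩ := hwzero y h.symm
      simp [f, g, h1, h2]
    · simp only [f, g]
      field_simp [Real.sqrt_ne_zero'.2 h]
  have hf2 : ∑ y, f y ^ 2 = 2 := by
    have : ∀ y, f y ^ 2 = w y := fun y => Real.sq_sqrt (hwnn y)
    calc ∑ y, f y ^ 2 = ∑ y, ((2/3) * p y + (4/3) * q y) :=
          Finset.sum_congr rfl (fun y _ => by rw [this y, hw]; ring)
      _ = (2/3) * ∑ y, p y + (4/3) * ∑ y, q y := by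
          rw [Finset.sum_add_distrib, ← Finset.mul_sum, ← Finset.mul_sum]
      _ = 2 := by rw [hp.2, hq.2]; norm_num
  have hg2 : ∑ y, g y ^ 2 ≤ KLdiv p q := by
    have hkls : ∑ y, kl y = KLdiv p q := by
      simp only [hkl, KLdiv]
      rw [Finset.sum_add_distrib, Finset.sum_sub_distrib, hp.2, hq.2]
      ring
    rw [← hkls]
    apply Finset.sum_le_sum
    intro y _
    rcases eq_or_lt_of_le (hwnn y) with h | h
    · obtain ⟨h1, h2⟩ := hwzero y h.symm
      simp [g, h1, h2, hkl]
    · have : g y ^ 2 = (p y - q y)^2 / w y := by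
        rw [div_pow, Real.sq_sqrt (hwnn y), sq_abs]
      rw [this, div_le_iff₀ h]
      nlinarith [hptwise y]
  have hklnn : 0 ≤ ∑ y, g y ^ 2 := Finset.sum_nonneg fun y _ => sq_nonneg _
  calc (∑ y, |p y - q y|)^2 = (∑ y, f y * g y)^2 := by simp only [hfg]
    _ ≤ (∑ y, f y ^ 2) * ∑ y, g y ^ 2 := Finset.sum_mul_sq_le_sq_mul_sq _ _ _
    _ = 2 * ∑ y, g y ^ 2 := by rw [hf2]
    _ ≤ 2 * KLdiv p q := by linarith

end Aux

/-- **Primal–dual coupling bound** (eq. A_3 in the proof of Theorem 1).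
For probability vectors `p, q` with `supp(p) ⊆ supp(q)`, bounded rewards
`|R_j(y)| ≤ R_max`, dual vectors `λ, λ'` and any `C > 0`:
`Σ_y (p(y) − q(y))·Σ_j (λ_j − λ'_j)·R_j(y) ≤ C·KL(p‖q) + (|H|·R_max²/(2C))·‖λ − λ'‖₂²`. -/
theorem primal_dual_coupling_bound
    {Y H : Type*} [Fintype Y] [Fintype H] [Nonempty Y] [Nonempty H]
    (R : H → Y → ℝ) (Rmax : ℝ) (hR : ∀ j y, |R j y| ≤ Rmax)
    (p q : Y → ℝ) (hp : IsProbVec p) (hq : IsProbVec q)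
    (hsupp : ∀ y, q y = 0 → p y = 0)
    (lam lam' : H → ℝ) (C : ℝ) (hC : 0 < C) :
    ∑ y, (p y - q y) * ∑ j, (lam j - lam' j) * R j y
      ≤ C * KLdiv p q + (Fintype.card H * Rmax ^ 2 / (2 * C)) * ∑ j, (lam j - lam' j) ^ 2 := by
  set D : H → ℝ := fun j => lam j - lam' j with hD
  set M : ℝ := Rmax * ∑ j, |D j| with hM
  obtain ⟨j0⟩ := (inferInstance : Nonempty H)
  obtain ⟨y0⟩ := (inferInstance : Nonempty Y)
  have hRmax0 : 0 ≤ Rmax := le_trans (abs_nonneg _) (hR j0 y0)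
  have hM0 : 0 ≤ M := mul_nonneg hRmax0 (Finset.sum_nonneg fun j _ => abs_nonneg _)
  have hfB : ∀ y, |∑ j, D j * R j y| ≤ M := by
    intro y
    calc |∑ j, D j * R j y| ≤ ∑ j, |D j * R j y| := Finset.abs_sum_le_sum_abs _ _
      _ ≤ ∑ j, |D j| * Rmax := by
          apply Finset.sum_le_sum
          intro j _
          rw [abs_mul]
          exact mul_le_mul_of_nonneg_left (hR j y) (abs_nonneg _)
      _ = M := by rw [hM, ← Finset.sum_mul]; ring
  set S : ℝ := ∑ y, |p y - q y| with hS
  have hS0 : 0 ≤ S := Finset.sum_nonneg fun y _ => abs_nonneg _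
  have hpin : S ^ 2 ≤ 2 * KLdiv p q := pinsker p q hp hq hsupp
  have hstep1 : ∑ y, (p y - q y) * ∑ j, D j * R j y ≤ S * M := by
    rw [hS, Finset.sum_mul]
    apply Finset.sum_le_sum
    intro y _
    calc (p y - q y) * ∑ j, D j * R j y ≤ |(p y - q y) * ∑ j, D j * R j y| := le_abs_self _
      _ = |p y - q y| * |∑ j, D j * R j y| := abs_mul _ _
      _ ≤ |p y - q y| * M := mul_le_mul_of_nonneg_left (hfB y) (abs_nonneg _)
  have hM2 : M ^ 2 ≤ Rmax ^ 2 * (Fintype.card H * ∑ j, D j ^ 2) := by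
    have hcs : (∑ j, |D j|) ^ 2 ≤ (Fintype.card H : ℝ) * ∑ j, D j ^ 2 := by
      have := Finset.sum_mul_sq_le_sq_mul_sq Finset.univ (fun _ : H => (1:ℝ)) (fun j => |D j|)
      simpa [sq_abs, Finset.card_univ] using this
    have : M ^ 2 = Rmax ^ 2 * (∑ j, |D j|) ^ 2 := by rw [hM]; ring
    rw [this]
    exact mul_le_mul_of_nonneg_left hcs (sq_nonneg _)
  have hstep2 : S * M ≤ C / 2 * S ^ 2 + M ^ 2 / (2 * C) := by
    have key : 0 ≤ (C * S - M) ^ 2 / (2 * C) := div_nonneg (sq_nonneg _) (by linarith)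
    have expand : (C * S - M) ^ 2 / (2 * C) = C / 2 * S ^ 2 - S * M + M ^ 2 / (2 * C) := by
      field_simp; ring
    linarith
  calc ∑ y, (p y - q y) * ∑ j, D j * R j y ≤ S * M := hstep1
    _ ≤ C / 2 * S ^ 2 + M ^ 2 / (2 * C) := hstep2
    _ ≤ C * KLdiv p q + (Fintype.card H * Rmax ^ 2 / (2 * C)) * ∑ j, D j ^ 2 := by
        have h1 : C / 2 * S ^ 2 ≤ C * KLdiv p q := by nlinarith
        have h2 : M ^ 2 / (2 * C) ≤ (Fintype.card H * Rmax ^ 2 / (2 * C)) * ∑ j, D j ^ 2 := by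
          rw [div_le_iff₀ (by linarith : (0:ℝ) < 2 * C)]
          have : (Fintype.card H * Rmax ^ 2 / (2 * C)) * (∑ j, D j ^ 2) * (2 * C)
              = Rmax ^ 2 * (Fintype.card H * ∑ j, D j ^ 2) := by
            field_simp
          rw [this]
          exact hM2
        linarith
end

section
/- ℓ₁-bound on the optimal dual variable under Slater's condition (Lemma, bdd_lambda). Assume Slater's condition: there exist a policy π̄ and ξ > 0 with E_{x∼D, y∼π̄(·|x)}[R_j(x,y)] ≥ ξ for all j ∈ H. Define J(π) := E_{x∼D}[ Σ_y π(y|x)·Σ_{k∈S} w_k R_k(x,y) − β·KL(π(·|x)‖π_ref(·|x)) ]. Let (π*, λ*) be a saddle point of the Lagrangian: λ* ∈ ℝ^H with λ* ≥ 0 componentwise, π* maximizes π ↦ L(π, λ*) over all policies, and λ* minimizes λ ↦ L(π*, λ) over λ ≥ 0. Then ‖λ*‖₁ ≤ (1/ξ)·( J(π*) − J(π̄) ). -/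
open BigOperators

/-- A policy assigns to each prompt `x` a probability vector on responses. -/
def IsPolicy {X Y : Type*} [Fintype Y] (π : X → Y → ℝ) : Prop :=
  ∀ x, (∀ y, 0 ≤ π x y) ∧ ∑ y, π x y = 1

/-- **ℓ₁-bound on the optimal dual variable under Slater's condition**
(Lemma `bdd_lambda`). If a strictly feasible policy `π̄` with margin `ξ > 0` exists,
then any saddle point `(π*, λ*)` of the Lagrangian satisfies
`‖λ*‖₁ ≤ (1/ξ)(J(π*) − J(π̄))`, where `J` is the KL-regularized soft-reward objective. -/
theorem dual_variable_l1_bound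
    {X Y S H : Type*} [Fintype X] [Fintype Y] [Fintype S] [Fintype H]
    [Nonempty X] [Nonempty Y] [Nonempty H]
    (D : X → ℝ) (hD0 : ∀ x, 0 ≤ D x) (hD1 : ∑ x, D x = 1)
    (w : S → ℝ) (hw0 : ∀ k, 0 ≤ w k) (hw1 : ∑ k, w k = 1)
    (RS : S → X → Y → ℝ) (RH : H → X → Y → ℝ)
    (πref : X → Y → ℝ) (hπref : IsPolicy πref)
    (β : ℝ) (hβ : 0 < β)
    (Slam : (H → ℝ) → X → Y → ℝ)
    (hSlam : ∀ lam x y, Slam lam x y = (∑ k, w k * RS k x y) + ∑ j, lam j * RH j x y)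
    (L : (X → Y → ℝ) → (H → ℝ) → ℝ)
    (hL : ∀ π lam, L π lam
      = ∑ x, D x * ((∑ y, π x y * Slam lam x y) - β * KLdiv (π x) (πref x)))
    (J : (X → Y → ℝ) → ℝ)
    (hJ : ∀ π, J π
      = ∑ x, D x * ((∑ y, π x y * ∑ k, w k * RS k x y) - β * KLdiv (π x) (πref x)))
    -- Slater's condition
    (πbar : X → Y → ℝ) (hπbar : IsPolicy πbar) (ξ : ℝ) (hξ : 0 < ξ)
    (hslater : ∀ j, ξ ≤ ∑ x, D x * ∑ y, πbar x y * RH j x y)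
    -- saddle point
    (πstar : X → Y → ℝ) (hπstar : IsPolicy πstar)
    (lamstar : H → ℝ) (hlamstar0 : ∀ j, 0 ≤ lamstar j)
    (hπstarMax : ∀ π : X → Y → ℝ, IsPolicy π → L π lamstar ≤ L πstar lamstar)
    (hlamstarMin : ∀ lam : H → ℝ, (∀ j, 0 ≤ lam j) → L πstar lamstar ≤ L πstar lam) :
    ∑ j, |lamstar j| ≤ (1 / ξ) * (J πstar - J πbar) := by
  have key : ∀ π lam, L π lam
      = J π + ∑ j, lam j * ∑ x, D x * ∑ y, π x y * RH j x y := by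
    intro π lam
    rw [hL, hJ]
    have hx : ∀ x ∈ (Finset.univ : Finset X),
        D x * ((∑ y, π x y * Slam lam x y) - β * KLdiv (π x) (πref x))
        = D x * ((∑ y, π x y * ∑ k, w k * RS k x y) - β * KLdiv (π x) (πref x))
          + ∑ j, lam j * (D x * ∑ y, π x y * RH j x y) := by
      intro x _
      have h1 : (∑ y, π x y * Slam lam x y)
          = (∑ y, π x y * ∑ k, w k * RS k x y)
            + ∑ j, lam j * ∑ y, π x y * RH j x y := by
        simp only [hSlam, mul_add, Finset.sum_add_distrib]
        congr 1
        simp_rw [Finset.mul_sum]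
        rw [Finset.sum_comm]
        refine Finset.sum_congr rfl fun j _ => Finset.sum_congr rfl fun y _ => by ring
      rw [h1, add_sub_right_comm, mul_add, Finset.mul_sum]
      congr 1
      refine Finset.sum_congr rfl fun j _ => by ring
    rw [Finset.sum_congr rfl hx, Finset.sum_add_distrib, Finset.sum_comm]
    congr 1
    refine Finset.sum_congr rfl fun j _ => ?_
    rw [Finset.mul_sum]
  have hupper : L πstar lamstar ≤ J πstar := by
    have h0 := hlamstarMin 0 (fun j => le_rfl)
    rw [key πstar 0] at h0
    simpa using h0
  have hlower : J πbar + ξ * ∑ j, lamstar j ≤ L πbar lamstar := by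
    rw [key πbar lamstar]
    have : ξ * ∑ j, lamstar j ≤ ∑ j, lamstar j * ∑ x, D x * ∑ y, πbar x y * RH j x y := by
      rw [Finset.mul_sum]
      refine Finset.sum_le_sum fun j _ => ?_
      rw [mul_comm]
      exact mul_le_mul_of_nonneg_left (hslater j) (hlamstar0 j)
    linarith
  have hchain : ξ * ∑ j, lamstar j ≤ J πstar - J πbar := by
    have := hπstarMax πbar hπbar
    linarith
  have habs : ∑ j, |lamstar j| = ∑ j, lamstar j :=
    Finset.sum_congr rfl fun j _ => abs_of_nonneg (hlamstar0 j)
  rw [habs, one_div, inv_mul_eq_div, le_div_iff₀ hξ]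
  linarith
end

section
/- Explicit bound on the optimal dual variable (Remark after Lemma bdd_lambda). Assume: (i) Slater's condition with constant ξ > 0 (there is a policy π̄ with E_{x∼D, y∼π̄(·|x)}[R_j(x,y)] ≥ ξ for all j ∈ H); (ii) bounded rewards: |R_k(x,y)| ≤ R_max for all k ∈ S ∪ H and all (x,y); (iii) full-support reference: π_ref(y|x) ≥ p_min with p_min ∈ (0,1] for all (x,y). Then any saddle point (π*, λ*) of the Lagrangian (λ* ≥ 0, π* maximizes L(·, λ*) over all policies, λ* minimizes L(π*, ·) over λ ≥ 0) satisfies ‖λ*‖₁ ≤ (2/ξ)·( R_max + β·log(1/p_min) ). -/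
open BigOperators

lemma KL_nonneg {Y : Type*} [Fintype Y] (p q : Y → ℝ)
    (hp0 : ∀ y, 0 ≤ p y) (hp1 : ∑ y, p y = 1)
    (hq0 : ∀ y, 0 < q y) (hq1 : ∑ y, q y ≤ 1) : 0 ≤ KLdiv p q := by
  have key : ∑ y, p y * Real.log (q y / p y) ≤ 0 := by
    calc ∑ y, p y * Real.log (q y / p y) ≤ ∑ y, (q y - p y) := by
          apply Finset.sum_le_sum
          intro y _
          rcases eq_or_lt_of_le (hp0 y) with h | h
          · simp [← h]; linarith [(hq0 y).le]
          · have hpos : 0 < q y / p y := div_pos (hq0 y) h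
            have := Real.log_le_sub_one_of_pos hpos
            have h2 : p y * Real.log (q y / p y) ≤ p y * (q y / p y - 1) :=
              mul_le_mul_of_nonneg_left this h.le
            calc p y * Real.log (q y / p y) ≤ p y * (q y / p y - 1) := h2
              _ = q y - p y := by field_simp
      _ = (∑ y, q y) - 1 := by rw [Finset.sum_sub_distrib, hp1]
      _ ≤ 0 := by linarith
  have heq : KLdiv p q = -∑ y, p y * Real.log (q y / p y) := by
    unfold KLdiv
    rw [← Finset.sum_neg_distrib]
    apply Finset.sum_congr rfl
    intro y _
    rcases eq_or_lt_of_le (hp0 y) with h | h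
    · simp [← h]
    · rw [Real.log_div (hq0 y).ne' h.ne', Real.log_div h.ne' (hq0 y).ne']; ring
  rw [heq]; linarith

lemma KL_le {Y : Type*} [Fintype Y] (p q : Y → ℝ) (pmin : ℝ)
    (hp0 : ∀ y, 0 ≤ p y) (hp1 : ∑ y, p y = 1)
    (hpmin : 0 < pmin) (hq : ∀ y, pmin ≤ q y) :
    KLdiv p q ≤ Real.log (1 / pmin) := by
  have hp_le : ∀ y, p y ≤ 1 := by
    intro y
    rw [← hp1]
    exact Finset.single_le_sum (fun i _ => hp0 i) (Finset.mem_univ y)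
  calc KLdiv p q ≤ ∑ y, p y * Real.log (1 / pmin) := by
        apply Finset.sum_le_sum
        intro y _
        rcases eq_or_lt_of_le (hp0 y) with h | h
        · simp [← h]
        · apply mul_le_mul_of_nonneg_left _ h.le
          apply Real.log_le_log (div_pos h (lt_of_lt_of_le hpmin (hq y)))
          rw [div_le_div_iff₀ (lt_of_lt_of_le hpmin (hq y)) hpmin]
          nlinarith [hq y, hp_le y]
    _ = Real.log (1 / pmin) := by rw [← Finset.sum_mul, hp1, one_mul]

/-- **Explicit bound on the optimal dual variable** (Remark after Lemma `bdd_lambda`).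
Under Slater's condition with margin `ξ > 0`, bounded rewards `|R_k| ≤ R_max`, and a
reference policy with full support `π_ref ≥ p_min > 0`, any saddle point `(π*, λ*)`
of the Lagrangian satisfies `‖λ*‖₁ ≤ (2/ξ)(R_max + β·log(1/p_min))`. -/
theorem dual_variable_explicit_bound
    {X Y S H : Type*} [Fintype X] [Fintype Y] [Fintype S] [Fintype H]
    [Nonempty X] [Nonempty Y] [Nonempty H]
    (D : X → ℝ) (hD0 : ∀ x, 0 ≤ D x) (hD1 : ∑ x, D x = 1)
    (w : S → ℝ) (hw0 : ∀ k, 0 ≤ w k) (hw1 : ∑ k, w k = 1)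
    (RS : S → X → Y → ℝ) (RH : H → X → Y → ℝ)
    (Rmax : ℝ) (hRmax : 0 < Rmax)
    (hRS : ∀ k x y, |RS k x y| ≤ Rmax) (hRH : ∀ j x y, |RH j x y| ≤ Rmax)
    (πref : X → Y → ℝ) (hπref : IsPolicy πref)
    (pmin : ℝ) (hpmin0 : 0 < pmin) (hpmin1 : pmin ≤ 1)
    (hπrefmin : ∀ x y, pmin ≤ πref x y)
    (β : ℝ) (hβ : 0 < β)
    (Slam : (H → ℝ) → X → Y → ℝ)
    (hSlam : ∀ lam x y, Slam lam x y = (∑ k, w k * RS k x y) + ∑ j, lam j * RH j x y)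
    (L : (X → Y → ℝ) → (H → ℝ) → ℝ)
    (hL : ∀ π lam, L π lam
      = ∑ x, D x * ((∑ y, π x y * Slam lam x y) - β * KLdiv (π x) (πref x)))
    -- Slater's condition
    (πbar : X → Y → ℝ) (hπbar : IsPolicy πbar) (ξ : ℝ) (hξ : 0 < ξ)
    (hslater : ∀ j, ξ ≤ ∑ x, D x * ∑ y, πbar x y * RH j x y)
    -- saddle point
    (πstar : X → Y → ℝ) (hπstar : IsPolicy πstar)
    (lamstar : H → ℝ) (hlamstar0 : ∀ j, 0 ≤ lamstar j)
    (hπstarMax : ∀ π : X → Y → ℝ, IsPolicy π → L π lamstar ≤ L πstar lamstar)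
    (hlamstarMin : ∀ lam : H → ℝ, (∀ j, 0 ≤ lam j) → L πstar lamstar ≤ L πstar lam) :
    ∑ j, |lamstar j| ≤ (2 / ξ) * (Rmax + β * Real.log (1 / pmin)) := by
  -- Decompose L as A π + Σ_j lam_j G_j(π)
  set A : (X → Y → ℝ) → ℝ := fun π => ∑ x, D x *
    ((∑ y, π x y * ∑ k, w k * RS k x y) - β * KLdiv (π x) (πref x)) with hA
  set G : (X → Y → ℝ) → H → ℝ := fun π j => ∑ x, D x * ∑ y, π x y * RH j x y with hG
  have hLsplit : ∀ π lam, L π lam = A π + ∑ j, lam j * G π j := by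
    intro π lam
    rw [hL]
    have hx : ∀ x, ∑ y, π x y * Slam lam x y
        = (∑ y, π x y * ∑ k, w k * RS k x y) + ∑ j, lam j * ∑ y, π x y * RH j x y := by
      intro x
      simp only [hSlam, mul_add, Finset.sum_add_distrib]
      congr 1
      simp only [Finset.mul_sum]
      rw [Finset.sum_comm]
      exact Finset.sum_congr rfl fun j _ => Finset.sum_congr rfl fun y _ => by ring
    calc ∑ x, D x * ((∑ y, π x y * Slam lam x y) - β * KLdiv (π x) (πref x))
        = ∑ x, (D x * ((∑ y, π x y * ∑ k, w k * RS k x y) - β * KLdiv (π x) (πref x))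
            + ∑ j, lam j * (D x * ∑ y, π x y * RH j x y)) := by
          apply Finset.sum_congr rfl
          intro x _
          have hdist : D x * ∑ j, lam j * ∑ y, π x y * RH j x y
              = ∑ j, lam j * (D x * ∑ y, π x y * RH j x y) := by
            rw [Finset.mul_sum]; exact Finset.sum_congr rfl fun j _ => by ring
          rw [hx x, ← hdist]; ring
      _ = A π + ∑ j, lam j * G π j := by
          rw [Finset.sum_add_distrib, hA, hG]
          congr 1
          rw [Finset.sum_comm]
          exact Finset.sum_congr rfl fun j _ => by rw [Finset.mul_sum]
  -- G_j(πstar) ≥ 0 and complementary slackness: Σ lamstar_j G_j(πstar) ≤ 0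
  have hGstar_le : ∑ j, lamstar j * G πstar j ≤ 0 := by
    have h0 := hlamstarMin (fun _ => 0) (fun _ => le_refl 0)
    rw [hLsplit, hLsplit] at h0
    simpa using h0
  -- Saddle: L πbar lamstar ≤ L πstar lamstar ≤ A πstar
  have hbar := hπstarMax πbar hπbar
  rw [hLsplit, hLsplit] at hbar
  have hslater' : ξ * ∑ j, lamstar j ≤ ∑ j, lamstar j * G πbar j := by
    rw [Finset.mul_sum]
    apply Finset.sum_le_sum
    intro j _
    rw [mul_comm]
    exact mul_le_mul_of_nonneg_left (hslater j) (hlamstar0 j)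
  -- Bounds on A
  have habsS : ∀ (π : X → Y → ℝ), IsPolicy π → ∀ x, |∑ y, π x y * ∑ k, w k * RS k x y| ≤ Rmax := by
    intro π hπ x
    calc |∑ y, π x y * ∑ k, w k * RS k x y| ≤ ∑ y, |π x y * ∑ k, w k * RS k x y| :=
          Finset.abs_sum_le_sum_abs _ _
      _ ≤ ∑ y, π x y * Rmax := by
          apply Finset.sum_le_sum
          intro y _
          rw [abs_mul, abs_of_nonneg ((hπ x).1 y)]
          apply mul_le_mul_of_nonneg_left _ ((hπ x).1 y)
          calc |∑ k, w k * RS k x y| ≤ ∑ k, |w k * RS k x y| := Finset.abs_sum_le_sum_abs _ _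
            _ ≤ ∑ k, w k * Rmax := by
                apply Finset.sum_le_sum
                intro k _
                rw [abs_mul, abs_of_nonneg (hw0 k)]
                exact mul_le_mul_of_nonneg_left (hRS k x y) (hw0 k)
            _ = Rmax := by rw [← Finset.sum_mul, hw1, one_mul]
      _ = Rmax := by rw [← Finset.sum_mul, (hπ x).2, one_mul]
  have hlog0 : 0 ≤ Real.log (1 / pmin) := by
    apply Real.log_nonneg
    rw [le_div_iff₀ hpmin0]; linarith
  have hAstar : A πstar ≤ Rmax := by
    rw [hA]
    calc ∑ x, D x * ((∑ y, πstar x y * ∑ k, w k * RS k x y) - β * KLdiv (πstar x) (πref x))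
        ≤ ∑ x, D x * Rmax := by
          apply Finset.sum_le_sum
          intro x _
          apply mul_le_mul_of_nonneg_left _ (hD0 x)
          have hKL : 0 ≤ KLdiv (πstar x) (πref x) :=
            KL_nonneg _ _ (hπstar x).1 (hπstar x).2
              (fun y => lt_of_lt_of_le hpmin0 (hπrefmin x y)) (le_of_eq (hπref x).2)
          have := (abs_le.mp (habsS πstar hπstar x)).2
          nlinarith
      _ = Rmax := by rw [← Finset.sum_mul, hD1, one_mul]
  have hAbar : -(Rmax + β * Real.log (1 / pmin)) ≤ A πbar := by
    rw [hA]
    calc -(Rmax + β * Real.log (1 / pmin))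
        = ∑ x, D x * (-(Rmax + β * Real.log (1 / pmin))) := by
          rw [← Finset.sum_mul, hD1, one_mul]
      _ ≤ ∑ x, D x * ((∑ y, πbar x y * ∑ k, w k * RS k x y) - β * KLdiv (πbar x) (πref x)) := by
          apply Finset.sum_le_sum
          intro x _
          apply mul_le_mul_of_nonneg_left _ (hD0 x)
          have hKL : KLdiv (πbar x) (πref x) ≤ Real.log (1 / pmin) :=
            KL_le _ _ pmin (hπbar x).1 (hπbar x).2 hpmin0 (hπrefmin x)
          have := (abs_le.mp (habsS πbar hπbar x)).1
          nlinarith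
  -- Combine
  have hmain : ξ * ∑ j, lamstar j ≤ 2 * (Rmax + β * Real.log (1 / pmin)) := by
    nlinarith [hbar, hGstar_le, hslater', hAstar, hAbar]
  have habs : ∑ j, |lamstar j| = ∑ j, lamstar j :=
    Finset.sum_congr rfl fun j _ => abs_of_nonneg (hlamstar0 j)
  rw [habs, div_mul_eq_mul_div, le_div_iff₀ hξ]
  nlinarith [hmain]
end

section
/- Equivalence of the natural-policy-gradient update and the KL-regularized distributional update under tabular softmax parameterization (Remark/Proposition, single-state version). Let Y be a finite nonempty set, π_ref a strictly positive probability vector on Y, θ : Y → ℝ, and π_θ(y) := exp(θ(y)) / Σ_{y'} exp(θ(y')) the softmax policy. Let S : Y → ℝ, β > 0, η > 0. Define V := Σ_y π_θ(y)·( S(y) − β·log(π_θ(y)/π_ref(y)) ) and the advantage A(y) := S(y) − β·log(π_θ(y)/π_ref(y)) − V. For any constant c ∈ ℝ, set θ⁺(y) := θ(y) + (1/(η+β))·( A(y) + c ). Then the softmax policy of θ⁺ satisfies π_{θ⁺}(y) = π_θ(y)·exp( A(y)/(η+β) ) / Σ_{y'} π_θ(y')·exp( A(y')/(η+β) ), and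 π_{θ⁺} is the unique maximizer over the probability simplex Δ(Y) of π ↦ Σ_y π(y)·S(y) − β·KL(π‖π_ref) − η·KL(π‖π_θ). -/
open BigOperators

lemma gibbs_term {a b : ℝ} (ha : 0 ≤ a) (hb : 0 < b) :
    a - b ≤ a * Real.log (a / b) := by
  rcases eq_or_lt_of_le ha with h | h
  · simp [← h]; linarith
  · have hlog : Real.log (b / a) ≤ b / a - 1 :=
      Real.log_le_sub_one_of_pos (div_pos hb h)
    have h1 : a * Real.log (b / a) ≤ a * (b / a - 1) :=
      mul_le_mul_of_nonneg_left hlog h.le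
    have h2 : a * (b / a - 1) = b - a := by field_simp
    have h3 : Real.log (a / b) = - Real.log (b / a) := by
      rw [← Real.log_inv, inv_div]
    rw [h3]; nlinarith

lemma gibbs_term_lt {a b : ℝ} (ha : 0 ≤ a) (hb : 0 < b) (hab : a ≠ b) :
    a - b < a * Real.log (a / b) := by
  rcases eq_or_lt_of_le ha with h | h
  · simp [← h]; linarith
  · have hba : b / a ≠ 1 := by
      intro hc
      exact hab ((div_eq_one_iff_eq h.ne').mp hc).symm
    have hlog : Real.log (b / a) < b / a - 1 :=
      Real.log_lt_sub_one_of_pos (div_pos hb h) hba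
    have h1 : a * Real.log (b / a) < a * (b / a - 1) :=
      (mul_lt_mul_iff_right₀ h).mpr hlog
    have h2 : a * (b / a - 1) = b - a := by field_simp
    have h3 : Real.log (a / b) = - Real.log (b / a) := by
      rw [← Real.log_inv, inv_div]
    rw [h3]; nlinarith

lemma KLdiv_nonneg {Y : Type*} [Fintype Y] {p q : Y → ℝ}
    (hp : IsProbVec p) (hq0 : ∀ y, 0 < q y) (hq1 : ∑ y, q y = 1) :
    0 ≤ KLdiv p q := by
  have h : ∑ y, (p y - q y) ≤ KLdiv p q :=
    Finset.sum_le_sum (fun y _ => gibbs_term (hp.1 y) (hq0 y))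
  rwa [Finset.sum_sub_distrib, hp.2, hq1, sub_self] at h

lemma KLdiv_eq_zero_imp {Y : Type*} [Fintype Y] {p q : Y → ℝ}
    (hp : IsProbVec p) (hq0 : ∀ y, 0 < q y) (hq1 : ∑ y, q y = 1)
    (h : KLdiv p q = 0) : p = q := by
  by_contra hne
  obtain ⟨y₀, hy₀⟩ : ∃ y, p y ≠ q y := by
    by_contra hc; push_neg at hc; exact hne (funext hc)
  have h1 : ∑ y, (p y - q y) < KLdiv p q := by
    refine Finset.sum_lt_sum (fun y _ => gibbs_term (hp.1 y) (hq0 y)) ?_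
    exact ⟨y₀, Finset.mem_univ _, gibbs_term_lt (hp.1 y₀) (hq0 y₀) hy₀⟩
  rw [Finset.sum_sub_distrib, hp.2, hq1, sub_self, h] at h1
  exact lt_irrefl 0 h1

/-- **Equivalence of the natural-policy-gradient update and the KL-regularized
distributional update under tabular softmax parameterization** (single-state version).
With `π_θ` the softmax policy of `θ`, advantage `A(y) = S(y) − β·log(π_θ(y)/π_ref(y)) − V`,
and `θ⁺ = θ + (A + c)/(η+β)`, the softmax policy of `θ⁺` has the Gibbs form
`π_{θ⁺}(y) ∝ π_θ(y)·exp(A(y)/(η+β))` and is the unique maximizer over the simplex of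
`π ↦ Σ_y π(y)S(y) − β·KL(π‖π_ref) − η·KL(π‖π_θ)`. -/
theorem npg_softmax_equivalence
    {Y : Type*} [Fintype Y] [Nonempty Y]
    (πref : Y → ℝ) (hπref0 : ∀ y, 0 < πref y) (hπref1 : ∑ y, πref y = 1)
    (θ : Y → ℝ) (πθ : Y → ℝ)
    (hπθ : ∀ y, πθ y = Real.exp (θ y) / ∑ y', Real.exp (θ y'))
    (S : Y → ℝ) (β η : ℝ) (hβ : 0 < β) (hη : 0 < η)
    (V : ℝ) (hV : V = ∑ y, πθ y * (S y - β * Real.log (πθ y / πref y)))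
    (A : Y → ℝ) (hA : ∀ y, A y = S y - β * Real.log (πθ y / πref y) - V)
    (c : ℝ) (θplus : Y → ℝ)
    (hθplus : ∀ y, θplus y = θ y + (1 / (η + β)) * (A y + c))
    (πplus : Y → ℝ)
    (hπplus : ∀ y, πplus y = Real.exp (θplus y) / ∑ y', Real.exp (θplus y')) :
    (∀ y, πplus y
        = πθ y * Real.exp (A y / (η + β)) / ∑ y', πθ y' * Real.exp (A y' / (η + β))) ∧
    (∀ p : Y → ℝ, IsProbVec p →
      (∑ y, p y * S y) - β * KLdiv p πref - η * KLdiv p πθ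
        ≤ (∑ y, πplus y * S y) - β * KLdiv πplus πref - η * KLdiv πplus πθ) ∧
    (∀ p : Y → ℝ, IsProbVec p →
      (∑ y, p y * S y) - β * KLdiv p πref - η * KLdiv p πθ
        = (∑ y, πplus y * S y) - β * KLdiv πplus πref - η * KLdiv πplus πθ →
      p = πplus) := by
  have hηβ : (0:ℝ) < η + β := by linarith
  have hSθ : (0:ℝ) < ∑ y', Real.exp (θ y') :=
    Finset.sum_pos (fun y _ => Real.exp_pos _) Finset.univ_nonempty
  have hπθ0 : ∀ y, 0 < πθ y := fun y => by
    rw [hπθ]; exact div_pos (Real.exp_pos _) hSθ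
  -- decomposition of exp(θplus)
  have hexp : ∀ y, Real.exp (θplus y)
      = Real.exp (θ y) * Real.exp (A y / (η + β)) * Real.exp (c / (η + β)) := by
    intro y
    rw [hθplus, ← Real.exp_add, ← Real.exp_add]
    congr 1
    field_simp
    ring
  set T : ℝ := ∑ y', Real.exp (θ y') * Real.exp (A y' / (η + β)) with hT
  have hT0 : 0 < T :=
    Finset.sum_pos (fun y _ => mul_pos (Real.exp_pos _) (Real.exp_pos _))
      Finset.univ_nonempty
  have hsumplus : (∑ y', Real.exp (θplus y')) = T * Real.exp (c / (η + β)) := by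
    rw [hT, Finset.sum_mul]
    exact Finset.sum_congr rfl (fun y _ => hexp y)
  set Z : ℝ := ∑ y', πθ y' * Real.exp (A y' / (η + β)) with hZ
  have hZT : Z = T / ∑ y', Real.exp (θ y') := by
    rw [hZ, hT, Finset.sum_div]
    exact Finset.sum_congr rfl (fun y _ => by rw [hπθ, div_mul_eq_mul_div])
  have hZ0 : 0 < Z := by rw [hZT]; exact div_pos hT0 hSθ
  -- Part 1
  have h1 : ∀ y, πplus y = πθ y * Real.exp (A y / (η + β)) / Z := by
    intro y
    rw [hπplus, hexp, hsumplus, mul_div_mul_right _ _ (Real.exp_pos _).ne',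
      hπθ, hZT]
    rw [div_mul_eq_mul_div]
    field_simp
  have hπplus0 : ∀ y, 0 < πplus y := fun y => by
    rw [h1]; exact div_pos (mul_pos (hπθ0 y) (Real.exp_pos _)) hZ0
  have hπplus1 : ∑ y, πplus y = 1 := by
    rw [show (∑ y, πplus y) = (∑ y, πθ y * Real.exp (A y / (η + β))) / Z from by
      rw [Finset.sum_div]; exact Finset.sum_congr rfl (fun y _ => h1 y)]
    rw [← hZ, div_self hZ0.ne']
  have hπplusPV : IsProbVec πplus := ⟨fun y => (hπplus0 y).le, hπplus1⟩
  have hlogplus : ∀ y, Real.log (πplus y)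
      = Real.log (πθ y) + A y / (η + β) - Real.log Z := by
    intro y
    rw [h1, Real.log_div (mul_pos (hπθ0 y) (Real.exp_pos _)).ne' hZ0.ne',
      Real.log_mul (hπθ0 y).ne' (Real.exp_pos _).ne', Real.log_exp]
  -- key identity
  have key : ∀ p : Y → ℝ, IsProbVec p →
      (∑ y, p y * S y) - β * KLdiv p πref - η * KLdiv p πθ
        = -(η + β) * KLdiv p πplus + (V + (η + β) * Real.log Z) := by
    intro p hp
    have hterm : ∀ y, p y * S y - β * (p y * Real.log (p y / πref y))
        - η * (p y * Real.log (p y / πθ y))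
        = -(η + β) * (p y * Real.log (p y / πplus y))
          + p y * (V + (η + β) * Real.log Z) := by
      intro y
      rcases eq_or_lt_of_le (hp.1 y) with h | h
      · simp [← h]
      · rw [Real.log_div h.ne' (hπref0 y).ne', Real.log_div h.ne' (hπθ0 y).ne',
          Real.log_div h.ne' (hπplus0 y).ne', hlogplus y, hA y,
          Real.log_div (hπθ0 y).ne' (hπref0 y).ne']
        field_simp
        ring
    unfold KLdiv
    rw [Finset.mul_sum, Finset.mul_sum, Finset.mul_sum]
    have : (∑ y, p y * S y) - (∑ y, β * (p y * Real.log (p y / πref y)))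
        - (∑ y, η * (p y * Real.log (p y / πθ y)))
        = ∑ y, (-(η + β) * (p y * Real.log (p y / πplus y))
            + p y * (V + (η + β) * Real.log Z)) := by
      rw [← Finset.sum_sub_distrib, ← Finset.sum_sub_distrib]
      exact Finset.sum_congr rfl (fun y _ => hterm y)
    rw [this, Finset.sum_add_distrib, ← Finset.mul_sum, ← Finset.sum_mul, hp.2,
      one_mul]
  have hKLself : KLdiv πplus πplus = 0 := by
    unfold KLdiv
    refine Finset.sum_eq_zero (fun y _ => ?_)
    rw [div_self (hπplus0 y).ne', Real.log_one, mul_zero]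
  refine ⟨fun y => (h1 y).trans (by rw [hZ]), ?_, ?_⟩
  · intro p hp
    rw [key p hp, key πplus hπplusPV, hKLself]
    have := KLdiv_nonneg hp hπplus0 hπplus1
    nlinarith
  · intro p hp heq
    rw [key p hp, key πplus hπplusPV, hKLself] at heq
    have hKL0 : KLdiv p πplus = 0 := by
      have h' : (η + β) * KLdiv p πplus = 0 := by ring_nf at heq ⊢; linarith
      exact (mul_eq_zero.mp h').resolve_left hηβ.ne'
    exact KLdiv_eq_zero_imp hp hπplus0 hπplus1 hKL0
end

section
/- Advantage form of the policy gradient for the KL-regularized objective under tabular softmax parameterization (appendix computation, single-state version). Let Y be a finite nonempty set, π_ref a strictly positive probability vector on Y, S : Y → ℝ, and β > 0. For θ : Y → ℝ let π_θ(y) := exp(θ(y)) / Σ_{y'} exp(θ(y')), and define L(θ) := Σ_y π_θ(y)·( S(y) − β·log(π_θ(y)/π_ref(y)) ). Then L is differentiable in θ and, for every y ∈ Y, the partial derivative of L with respect to the coordinate θ(y) equals π_θ(y)·A_θ(y), where the advantage is A_θ(y) := S(y) − β·log(π_θ(y)/π_ref(y)) − L(θ). -/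
open BigOperators

set_option maxHeartbeats 1000000 in
/-- **Advantage form of the policy gradient for the KL-regularized objective under
tabular softmax parameterization** (single-state version).
With `π_θ(y) = exp(θ(y))/Σ_{y'} exp(θ(y'))` and
`L(θ) = Σ_y π_θ(y)(S(y) − β·log(π_θ(y)/π_ref(y)))`, `L` is differentiable and the
partial derivative of `L` in the coordinate `θ(y)` equals `π_θ(y)·A_θ(y)` where
`A_θ(y) = S(y) − β·log(π_θ(y)/π_ref(y)) − L(θ)`. -/
theorem softmax_policy_gradient_advantage
    {Y : Type*} [Fintype Y] [DecidableEq Y] [Nonempty Y]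
    (πref : Y → ℝ) (hπref0 : ∀ y, 0 < πref y) (hπref1 : ∑ y, πref y = 1)
    (S : Y → ℝ) (β : ℝ) (hβ : 0 < β)
    (sm : (Y → ℝ) → Y → ℝ)
    (hsm : ∀ θ y, sm θ y = Real.exp (θ y) / ∑ y', Real.exp (θ y'))
    (L : (Y → ℝ) → ℝ)
    (hL : ∀ θ, L θ = ∑ y, sm θ y * (S y - β * Real.log (sm θ y / πref y))) :
    Differentiable ℝ L ∧
    ∀ (θ : Y → ℝ) (y : Y),
      fderiv ℝ L θ (Pi.single y 1)
        = sm θ y * (S y - β * Real.log (sm θ y / πref y) - L θ) := by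
  classical
  set Z : (Y → ℝ) → ℝ := fun θ => ∑ y', Real.exp (θ y') with hZdef
  have hZpos : ∀ θ, 0 < Z θ := fun θ =>
    Finset.sum_pos (fun y _ => Real.exp_pos _) Finset.univ_nonempty
  set f : Y → ℝ := fun y => S y + β * Real.log (πref y) with hfdef
  set N : (Y → ℝ) → ℝ := fun θ => ∑ y, Real.exp (θ y) * (f y - β * θ y) with hNdef
  have hsmpos : ∀ θ y, 0 < sm θ y := by
    intro θ y; rw [hsm]; exact div_pos (Real.exp_pos _) (hZpos θ)
  have hlog : ∀ θ y, Real.log (sm θ y / πref y)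
      = θ y - Real.log (Z θ) - Real.log (πref y) := by
    intro θ y
    rw [Real.log_div (ne_of_gt (hsmpos θ y)) (ne_of_gt (hπref0 y)), hsm,
        Real.log_div (Real.exp_ne_zero _) (ne_of_gt (hZpos θ)), Real.log_exp]
  have hexplog : ∀ θ, Real.exp (-Real.log (Z θ)) = (Z θ)⁻¹ := by
    intro θ; rw [Real.exp_neg, Real.exp_log (hZpos θ)]
  have hLeq : ∀ θ, L θ = N θ / Z θ + β * Real.log (Z θ) := by
    intro θ
    have hsum1 : ∑ y, sm θ y = 1 := by
      simp only [hsm]; rw [← Finset.sum_div]; exact div_self (ne_of_gt (hZpos θ))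
    rw [hL]
    have hterm : ∀ y, sm θ y * (S y - β * Real.log (sm θ y / πref y))
        = (Real.exp (θ y) * (f y - β * θ y)) / Z θ + sm θ y * (β * Real.log (Z θ)) := by
      intro y
      rw [hlog θ y, hsm θ y]
      simp only [hfdef]
      have := ne_of_gt (hZpos θ)
      field_simp
      ring
    rw [Finset.sum_congr rfl (fun y _ => hterm y), Finset.sum_add_distrib,
        ← Finset.sum_div, ← Finset.sum_mul, hsum1, one_mul]
  have hLfun : L = fun θ => N θ * Real.exp (-Real.log (Z θ)) + β * Real.log (Z θ) := by
    funext θ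
    rw [hLeq θ, hexplog θ, div_eq_mul_inv]
  let P : Y → ((Y → ℝ) →L[ℝ] ℝ) := fun y => ContinuousLinearMap.proj y
  have hPd : ∀ (θ : Y → ℝ) (y : Y), HasFDerivAt (fun θ : Y → ℝ => θ y) (P y) θ :=
    fun θ y => (P y).hasFDerivAt
  have hZd : ∀ θ, HasFDerivAt Z (∑ y, Real.exp (θ y) • P y) θ := by
    intro θ
    exact HasFDerivAt.fun_sum fun y _ => (hPd θ y).exp
  have hNd : ∀ θ, HasFDerivAt N
      (∑ y, (Real.exp (θ y) • (-(β • P y)) + (f y - β * θ y) • (Real.exp (θ y) • P y))) θ := by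
    intro θ
    refine HasFDerivAt.fun_sum fun y _ => ?_
    exact ((hPd θ y).exp).mul (((hPd θ y).const_mul β).const_sub (f y))
  have hLd : ∀ θ, HasFDerivAt L
      ((N θ • (Real.exp (-Real.log (Z θ)) • (-((Z θ)⁻¹ • (∑ y, Real.exp (θ y) • P y))))
          + Real.exp (-Real.log (Z θ)) • (∑ y, (Real.exp (θ y) • (-(β • P y)) + (f y - β * θ y) • (Real.exp (θ y) • P y))))
        + β • ((Z θ)⁻¹ • (∑ y, Real.exp (θ y) • P y))) θ := by
    intro θ
    rw [hLfun]
    exact ((hNd θ).mul (((hZd θ).log (ne_of_gt (hZpos θ))).neg).exp).add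
      (((hZd θ).log (ne_of_gt (hZpos θ))).const_mul β)
  refine ⟨fun θ => (hLd θ).differentiableAt, fun θ y => ?_⟩
  rw [(hLd θ).fderiv]
  have hZne := ne_of_gt (hZpos θ)
  simp only [ContinuousLinearMap.add_apply, ContinuousLinearMap.smul_apply,
    ContinuousLinearMap.coe_sum', Finset.sum_apply,
    ContinuousLinearMap.neg_apply, ContinuousLinearMap.proj_apply, P,
    Pi.single_apply, smul_eq_mul, mul_ite, mul_one, mul_zero, mul_neg,
    Finset.sum_ite_eq', Finset.mem_univ, if_true, hexplog,
    Finset.sum_add_distrib, Finset.sum_neg_distrib, neg_mul, mul_neg, ite_mul, zero_mul, neg_zero]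
  rw [hlog θ y, hsm θ y, hLeq θ]
  simp only [hfdef]
  field_simp
  ring
end
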